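/- Let (θ₁, φ₁), (θ₂, φ₂), (θ₃, φ₃) be independent, each uniformly distributed on [0,2π]², and set hᵢ := sin θᵢ·sin φᵢ. Fix a real number a and a natural number n_R ≥ 1, and define G₁ := Σ_{s=1}^{n_R−1} (n_R − s)·cos(s·a·(h₁ − h₃)) and G₂ := Σ_{s=1}^{n_R−1} (n_R − s)·cos(s·a·(h₂ − h₃)). Then E[G₁·G₂] = Σ_{s=1}^{n_R−1} (n_R − s)²·(1/2)·J₀(s·a/2)⁴·(1 + J₀(s·a)²) + Σ_{s₂=1}^{n_R−1} Σ_{s₁=1, s₁≠s₂}^{n_R−1} (n_R − s₁)(n_R − s₂)·(J₀(s₁·a/2)²·J₀(s₂·a/2)²/2)·(J₀((s₁ + s₂)·a/2)² + J₀(|s₁ − s₂|·a/2)²). -/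

import Mathlib

open Real MeasureTheory Finset

/-- Bessel function of the first kind of order zero (integral representation). -/
noncomputable def J₀ (x : ℝ) : ℝ :=
  (1 / (2 * π)) * ∫ t in (0:ℝ)..(2 * π), Real.cos (x * Real.sin t)

/-- Expectation over three independent pairs of angles, each uniform on `[0, 2π]²`. -/
noncomputable def E6 (f : ℝ → ℝ → ℝ → ℝ → ℝ → ℝ → ℝ) : ℝ :=
  (1 / (2 * π) ^ 6) *
    ∫ θ₁ in (0:ℝ)..(2 * π), ∫ φ₁ in (0:ℝ)..(2 * π),
      ∫ θ₂ in (0:ℝ)..(2 * π), ∫ φ₂ in (0:ℝ)..(2 * π),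
        ∫ θ₃ in (0:ℝ)..(2 * π), ∫ φ₃ in (0:ℝ)..(2 * π), f θ₁ φ₁ θ₂ φ₂ θ₃ φ₃

@[fun_prop]
lemma J0_continuous : Continuous J₀ := by
  apply Continuous.mul continuous_const
  exact intervalIntegral.continuous_parametric_intervalIntegral_of_continuous'
    (by fun_prop) 0 (2*π)

lemma J0_even (x : ℝ) : J₀ (-x) = J₀ x := by
  unfold J₀; congr 1
  apply intervalIntegral.integral_congr
  intro t _; simp [neg_mul]

lemma J0_zero : J₀ 0 = 1 := by
  unfold J₀
  simp [Real.pi_ne_zero]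
  field_simp

lemma cos_int (K : ℝ) : ∫ t in (0:ℝ)..(2*π), Real.cos (K * Real.sin t) = 2*π * J₀ K := by
  unfold J₀; field_simp

lemma sin_int_zero (K : ℝ) : ∫ t in (0:ℝ)..(2*π), Real.sin (K * Real.sin t) = 0 := by
  have h := intervalIntegral.integral_comp_sub_left (fun t => Real.sin (K * Real.sin t)) (2*π)
    (a := 0) (b := 2*π)
  simp only [sub_zero, sub_self] at h
  have h2 : ∀ x : ℝ, Real.sin (K * Real.sin (2*π - x)) = - Real.sin (K * Real.sin x) := by
    intro x
    rw [show (2*π - x) = -x + 2*π by ring, Real.sin_add_two_pi, Real.sin_neg, mul_neg,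
      Real.sin_neg]
  simp only [h2] at h
  rw [intervalIntegral.integral_neg] at h
  linarith

lemma lem_cos (K C : ℝ) :
    ∫ t in (0:ℝ)..(2*π), Real.cos (K * Real.sin t + C) = 2*π * J₀ K * Real.cos C := by
  have h : ∀ t : ℝ, Real.cos (K * Real.sin t + C)
      = Real.cos (K * Real.sin t) * Real.cos C - Real.sin (K * Real.sin t) * Real.sin C := by
    intro t; rw [Real.cos_add]
  simp only [h]
  rw [intervalIntegral.integral_sub, intervalIntegral.integral_mul_const,
    intervalIntegral.integral_mul_const, cos_int, sin_int_zero]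
  · ring
  · exact (Continuous.intervalIntegrable (by fun_prop) _ _)
  · exact (Continuous.intervalIntegrable (by fun_prop) _ _)

lemma lem_cos_sub (M C : ℝ) :
    ∫ t in (0:ℝ)..(2*π), Real.cos (C - M * Real.sin t) = 2*π * J₀ M * Real.cos C := by
  simp only [show ∀ t : ℝ, C - M * Real.sin t = (-M) * Real.sin t + C from fun t => by ring]
  rw [lem_cos, J0_even]

lemma lem_cos_add (M C : ℝ) :
    ∫ t in (0:ℝ)..(2*π), Real.cos (C + M * Real.sin t) = 2*π * J₀ M * Real.cos C := by
  simp only [show ∀ t : ℝ, C + M * Real.sin t = M * Real.sin t + C from fun t => by ring]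
  rw [lem_cos]

lemma periodic_shift {f : ℝ → ℝ} (hf : Function.Periodic f (2*π)) (d : ℝ) :
    ∫ t in (0:ℝ)..(2*π), f (t + d) = ∫ t in (0:ℝ)..(2*π), f t := by
  rw [intervalIntegral.integral_comp_add_right]
  have := hf.intervalIntegral_add_eq d 0
  simpa [zero_add, add_comm] using this

lemma swap_int {f : ℝ → ℝ → ℝ} (hf : Continuous (Function.uncurry f)) :
    ∫ u in (0:ℝ)..(2*π), ∫ w in (0:ℝ)..(2*π), f u w
      = ∫ w in (0:ℝ)..(2*π), ∫ u in (0:ℝ)..(2*π), f u w := by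
  have h0 : (0:ℝ) ≤ 2*π := by positivity
  simp only [intervalIntegral.integral_of_le h0]
  apply MeasureTheory.integral_integral_swap
  rw [Measure.prod_restrict]
  apply ((hf.continuousOn.integrableOn_compact (isCompact_Icc.prod isCompact_Icc))).mono_set
  exact Set.prod_mono Set.Ioc_subset_Icc_self Set.Ioc_subset_Icc_self

lemma sin_add_sin' (A B : ℝ) :
    Real.sin A + Real.sin B = 2 * Real.sin ((A+B)/2) * Real.cos ((A-B)/2) := by
  have h1 := Real.sin_add ((A+B)/2) ((A-B)/2)
  have h2 := Real.sin_sub ((A+B)/2) ((A-B)/2)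
  rw [show (A+B)/2 + (A-B)/2 = A by ring] at h1
  rw [show (A+B)/2 - (A-B)/2 = B by ring] at h2
  linarith

lemma cos_cos_int (c e : ℝ) :
    ∫ u in (0:ℝ)..(2*π), Real.cos (c * Real.cos (u - e)) = 2*π * J₀ c := by
  have hper : Function.Periodic (fun t => Real.cos (c * Real.cos t)) (2*π) := by
    intro t; simp [Real.cos_add_two_pi]
  have h1 : ∫ u in (0:ℝ)..(2*π), Real.cos (c * Real.cos (u - e))
      = ∫ u in (0:ℝ)..(2*π), Real.cos (c * Real.cos u) := by
    simpa [sub_eq_add_neg] using periodic_shift hper (-e)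
  rw [h1]
  have hper2 : Function.Periodic (fun t => Real.cos (c * Real.sin t)) (2*π) := by
    intro t; simp [Real.sin_add_two_pi]
  have h2 : ∫ u in (0:ℝ)..(2*π), Real.cos (c * Real.cos u)
      = ∫ u in (0:ℝ)..(2*π), Real.cos (c * Real.sin u) := by
    rw [← periodic_shift hper2 (π/2)]
    apply intervalIntegral.integral_congr
    intro t _
    dsimp only
    rw [Real.sin_add_pi_div_two]
  rw [h2, cos_int]

/-- The key Bessel identity: `∫₀^{2π} J₀(K sin t) dt = 2π J₀(K/2)²`. -/
lemma lem_J (K : ℝ) : ∫ t in (0:ℝ)..(2*π), J₀ (K * Real.sin t) = 2*π * (J₀ (K/2))^2 := by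
  set x := K/2 with hx
  have hKx : K = 2*x := by rw [hx]; ring
  have hA : (2*π * J₀ x) * (2*π * J₀ x)
      = ∫ u in (0:ℝ)..(2*π), ∫ v in (0:ℝ)..(2*π),
          Real.cos (x * Real.sin u) * Real.cos (x * Real.sin v) := by
    rw [← cos_int x, ← intervalIntegral.integral_mul_const]
    apply intervalIntegral.integral_congr
    intro u _
    dsimp only
    rw [← intervalIntegral.integral_const_mul]
  have hB : ∀ u : ℝ, ∫ v in (0:ℝ)..(2*π), Real.cos (x * Real.sin u) * Real.cos (x * Real.sin v)
      = ∫ v in (0:ℝ)..(2*π), Real.cos (x * Real.sin u + x * Real.sin v) := by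
    intro u
    have hpt : ∀ v : ℝ, Real.cos (x * Real.sin u) * Real.cos (x * Real.sin v)
        = (Real.cos (x * Real.sin u + x * Real.sin v)
          + Real.cos (x * Real.sin u - x * Real.sin v)) / 2 := by
      intro v; rw [Real.cos_add, Real.cos_sub]; ring
    simp only [hpt]
    have hrefl : ∫ v in (0:ℝ)..(2*π), Real.cos (x * Real.sin u - x * Real.sin v)
        = ∫ v in (0:ℝ)..(2*π), Real.cos (x * Real.sin u + x * Real.sin v) := by
      have h := intervalIntegral.integral_comp_sub_left
        (fun v => Real.cos (x * Real.sin u - x * Real.sin v)) (2*π) (a := 0) (b := 2*π)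
      simp only [sub_zero, sub_self] at h
      rw [← h]
      apply intervalIntegral.integral_congr
      intro v _
      dsimp only
      have hs : Real.sin (2*π - v) = - Real.sin v := by
        rw [show (2*π - v) = -v + 2*π by ring, Real.sin_add_two_pi, Real.sin_neg]
      rw [hs, mul_neg, sub_neg_eq_add]
    rw [intervalIntegral.integral_div, intervalIntegral.integral_add, hrefl]
    · ring
    · exact (Continuous.intervalIntegrable (by fun_prop) _ _)
    · exact (Continuous.intervalIntegrable (by fun_prop) _ _)
  have hC : ∀ u : ℝ, ∫ v in (0:ℝ)..(2*π), Real.cos (x * Real.sin u + x * Real.sin v)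
      = ∫ w in (0:ℝ)..(2*π), Real.cos ((2*x) * Real.sin (w/2) * Real.cos (u - w/2)) := by
    intro u
    have hper : Function.Periodic (fun v => Real.cos (x * Real.sin u + x * Real.sin v)) (2*π) := by
      intro t; simp [Real.sin_add_two_pi]
    rw [← periodic_shift hper (-u)]
    apply intervalIntegral.integral_congr
    intro w _
    dsimp only
    have hsum := sin_add_sin' u (w + -u)
    rw [show (u + (w + -u))/2 = w/2 by ring, show (u - (w + -u))/2 = u - w/2 by ring] at hsum
    have hkey : x * Real.sin u + x * Real.sin (w + -u)
        = (2*x) * Real.sin (w/2) * Real.cos (u - w/2) := by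
      linear_combination x * hsum
    rw [hkey]
  have hD : (2*π * J₀ x) * (2*π * J₀ x)
      = ∫ w in (0:ℝ)..(2*π), ∫ u in (0:ℝ)..(2*π),
          Real.cos ((2*x) * Real.sin (w/2) * Real.cos (u - w/2)) := by
    rw [hA]
    simp only [hB, hC]
    exact swap_int (f := fun u w => Real.cos ((2*x) * Real.sin (w/2) * Real.cos (u - w/2)))
      (by fun_prop)
  have hE : ∀ w : ℝ, ∫ u in (0:ℝ)..(2*π), Real.cos ((2*x) * Real.sin (w/2) * Real.cos (u - w/2))
      = 2*π * J₀ ((2*x) * Real.sin (w/2)) := fun w => cos_cos_int _ _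
  simp only [hE] at hD
  rw [intervalIntegral.integral_const_mul] at hD
  have hcont : Continuous fun t : ℝ => J₀ (K * Real.sin t) :=
    J0_continuous.comp (by fun_prop)
  have hF1 : ∫ w in (0:ℝ)..(2*π), J₀ ((2*x) * Real.sin (w/2))
      = 2 * ∫ t in (0:ℝ)..π, J₀ (K * Real.sin t) := by
    rw [← hKx]
    have h := intervalIntegral.integral_comp_div (a := 0) (b := 2*π) (c := (2:ℝ))
      (f := fun t => J₀ (K * Real.sin t)) two_ne_zero
    simp only [zero_div] at h
    rw [h, show (2*π)/2 = π by ring, smul_eq_mul]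
  have hF2 : ∫ t in (0:ℝ)..(2*π), J₀ (K * Real.sin t)
      = 2 * ∫ t in (0:ℝ)..π, J₀ (K * Real.sin t) := by
    have hsplit : (∫ t in (0:ℝ)..π, J₀ (K * Real.sin t))
          + (∫ t in π..(2*π), J₀ (K * Real.sin t))
        = ∫ t in (0:ℝ)..(2*π), J₀ (K * Real.sin t) :=
      intervalIntegral.integral_add_adjacent_intervals
        (hcont.intervalIntegrable _ _) (hcont.intervalIntegrable _ _)
    have hsec : ∫ t in π..(2*π), J₀ (K * Real.sin t) = ∫ t in (0:ℝ)..π, J₀ (K * Real.sin t) := by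
      have h := intervalIntegral.integral_comp_add_right (a := (0:ℝ)) (b := π)
        (fun t => J₀ (K * Real.sin t)) π
      rw [zero_add, show π + π = 2*π by ring] at h
      rw [← h]
      apply intervalIntegral.integral_congr
      intro t _
      dsimp only
      rw [Real.sin_add_pi, mul_neg, J0_even]
    linarith [hsplit, hsec]
  rw [hF1, ← hF2] at hD
  refine mul_left_cancel₀ (show (2*π:ℝ) ≠ 0 by positivity) ?_
  linear_combination hD.symm

lemma int_sum2 (S1 S2 : Finset ℕ) (F : ℕ → ℕ → ℝ → ℝ) (hF : ∀ i j, Continuous (F i j)) :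
    (∫ t in (0:ℝ)..(2*π), ∑ i ∈ S1, ∑ j ∈ S2, F i j t)
      = ∑ i ∈ S1, ∑ j ∈ S2, ∫ t in (0:ℝ)..(2*π), F i j t := by
  rw [intervalIntegral.integral_finset_sum (fun i _ =>
    Continuous.intervalIntegrable (continuous_finset_sum _ fun j _ => hF i j) _ _)]
  exact Finset.sum_congr rfl fun i _ =>
    intervalIntegral.integral_finset_sum fun j _ => (hF i j).intervalIntegrable _ _

lemma term_int (p q xx yy sT : ℝ) :
    ∫ t in (0:ℝ)..(2*π),
        Real.cos (p * (xx - sT * Real.sin t)) * Real.cos (q * (yy - sT * Real.sin t))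
      = π * (J₀ ((p - q) * sT) * Real.cos (p*xx - q*yy)
          + J₀ ((p + q) * sT) * Real.cos (p*xx + q*yy)) := by
  have hpt : ∀ t : ℝ, Real.cos (p * (xx - sT * Real.sin t)) * Real.cos (q * (yy - sT * Real.sin t))
      = (Real.cos ((-((p - q) * sT)) * Real.sin t + (p*xx - q*yy))
        + Real.cos ((-((p + q) * sT)) * Real.sin t + (p*xx + q*yy))) / 2 := by
    intro t
    have hcc : ∀ A B : ℝ, Real.cos A * Real.cos B = (Real.cos (A - B) + Real.cos (A + B))/2 := by
      intro A B; rw [Real.cos_sub, Real.cos_add]; ring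
    rw [hcc, show p * (xx - sT * Real.sin t) - q * (yy - sT * Real.sin t)
        = (-((p - q) * sT)) * Real.sin t + (p*xx - q*yy) by ring,
      show p * (xx - sT * Real.sin t) + q * (yy - sT * Real.sin t)
        = (-((p + q) * sT)) * Real.sin t + (p*xx + q*yy) by ring]
  simp only [hpt]
  rw [intervalIntegral.integral_div, intervalIntegral.integral_add
      (Continuous.intervalIntegrable (by fun_prop) _ _)
      (Continuous.intervalIntegrable (by fun_prop) _ _),
    lem_cos, lem_cos, J0_even, J0_even]
  ring

theorem stmt_10 (a : ℝ) (nR : ℕ) (hR : 1 ≤ nR) :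
    E6 (fun θ₁ φ₁ θ₂ φ₂ θ₃ φ₃ =>
      (∑ s ∈ Finset.Icc 1 (nR - 1), ((nR : ℝ) - s) *
        Real.cos ((s : ℝ) * a *
          (Real.sin θ₁ * Real.sin φ₁ - Real.sin θ₃ * Real.sin φ₃))) *
      (∑ s ∈ Finset.Icc 1 (nR - 1), ((nR : ℝ) - s) *
        Real.cos ((s : ℝ) * a *
          (Real.sin θ₂ * Real.sin φ₂ - Real.sin θ₃ * Real.sin φ₃))))
    = (∑ s ∈ Finset.Icc 1 (nR - 1), ((nR : ℝ) - s) ^ 2 *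
        ((1 / 2) * (J₀ ((s : ℝ) * a / 2)) ^ 4 * (1 + (J₀ ((s : ℝ) * a)) ^ 2))) +
      ∑ s₂ ∈ Finset.Icc 1 (nR - 1),
        ∑ s₁ ∈ (Finset.Icc 1 (nR - 1)).filter (· ≠ s₂),
          ((nR : ℝ) - s₁) * ((nR : ℝ) - s₂) *
            ((J₀ ((s₁ : ℝ) * a / 2)) ^ 2 * (J₀ ((s₂ : ℝ) * a / 2)) ^ 2 / 2) *
            ((J₀ (((s₁ : ℝ) + (s₂ : ℝ)) * a / 2)) ^ 2 +
             (J₀ (|(s₁ : ℝ) - (s₂ : ℝ)| * a / 2)) ^ 2) := by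
  unfold E6
  set S := Finset.Icc 1 (nR - 1) with hS
  -- Step 1: integrate over φ₃
  have step1 : ∀ x y T : ℝ,
      (∫ t in (0:ℝ)..(2*π),
        (∑ s ∈ S, ((nR : ℝ) - s) * Real.cos ((s : ℝ) * a * (x - Real.sin T * Real.sin t))) *
        (∑ s ∈ S, ((nR : ℝ) - s) * Real.cos ((s : ℝ) * a * (y - Real.sin T * Real.sin t))))
      = ∑ s₁ ∈ S, ∑ s₂ ∈ S, ((nR:ℝ)-s₁) * ((nR:ℝ)-s₂) *
          (π * (J₀ (((s₁:ℝ)*a - (s₂:ℝ)*a) * Real.sin T)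
                * Real.cos ((s₁:ℝ)*a*x - (s₂:ℝ)*a*y)
              + J₀ (((s₁:ℝ)*a + (s₂:ℝ)*a) * Real.sin T)
                * Real.cos ((s₁:ℝ)*a*x + (s₂:ℝ)*a*y))) := by
    intro x y T
    simp only [Finset.sum_mul_sum]
    rw [int_sum2 S S (fun s₁ s₂ t =>
      (((nR : ℝ) - s₁) * Real.cos ((s₁ : ℝ) * a * (x - Real.sin T * Real.sin t))) *
      (((nR : ℝ) - s₂) * Real.cos ((s₂ : ℝ) * a * (y - Real.sin T * Real.sin t))))
      (fun i j => by fun_prop)]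
    refine Finset.sum_congr rfl fun s₁ _ => Finset.sum_congr rfl fun s₂ _ => ?_
    have hpt : ∀ t : ℝ,
        (((nR : ℝ) - s₁) * Real.cos ((s₁ : ℝ) * a * (x - Real.sin T * Real.sin t))) *
        (((nR : ℝ) - s₂) * Real.cos ((s₂ : ℝ) * a * (y - Real.sin T * Real.sin t)))
        = (((nR:ℝ)-s₁) * ((nR:ℝ)-s₂)) *
          (Real.cos ((s₁ : ℝ) * a * (x - Real.sin T * Real.sin t)) *
           Real.cos ((s₂ : ℝ) * a * (y - Real.sin T * Real.sin t))) := fun t => by ring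
    simp only [hpt]
    rw [intervalIntegral.integral_const_mul, term_int]
  simp only [step1]
  -- Step 2: integrate over θ₃
  have step2 : ∀ x y : ℝ,
      (∫ T in (0:ℝ)..(2*π), ∑ s₁ ∈ S, ∑ s₂ ∈ S, ((nR:ℝ)-s₁) * ((nR:ℝ)-s₂) *
          (π * (J₀ (((s₁:ℝ)*a - (s₂:ℝ)*a) * Real.sin T)
                * Real.cos ((s₁:ℝ)*a*x - (s₂:ℝ)*a*y)
              + J₀ (((s₁:ℝ)*a + (s₂:ℝ)*a) * Real.sin T)
                * Real.cos ((s₁:ℝ)*a*x + (s₂:ℝ)*a*y))))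
      = ∑ s₁ ∈ S, ∑ s₂ ∈ S, ((nR:ℝ)-s₁) * ((nR:ℝ)-s₂) *
          (π * (2*π*(J₀ (((s₁:ℝ)*a - (s₂:ℝ)*a)/2))^2 * Real.cos ((s₁:ℝ)*a*x - (s₂:ℝ)*a*y)
              + 2*π*(J₀ (((s₁:ℝ)*a + (s₂:ℝ)*a)/2))^2 * Real.cos ((s₁:ℝ)*a*x + (s₂:ℝ)*a*y))) := by
    intro x y
    rw [int_sum2 S S (fun s₁ s₂ T => ((nR:ℝ)-s₁) * ((nR:ℝ)-s₂) *
          (π * (J₀ (((s₁:ℝ)*a - (s₂:ℝ)*a) * Real.sin T)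
                * Real.cos ((s₁:ℝ)*a*x - (s₂:ℝ)*a*y)
              + J₀ (((s₁:ℝ)*a + (s₂:ℝ)*a) * Real.sin T)
                * Real.cos ((s₁:ℝ)*a*x + (s₂:ℝ)*a*y))))
      (fun i j => by fun_prop)]
    refine Finset.sum_congr rfl fun s₁ _ => Finset.sum_congr rfl fun s₂ _ => ?_
    rw [intervalIntegral.integral_const_mul, intervalIntegral.integral_const_mul,
      intervalIntegral.integral_add
        (Continuous.intervalIntegrable (by fun_prop) _ _)
        (Continuous.intervalIntegrable (by fun_prop) _ _),
      intervalIntegral.integral_mul_const, intervalIntegral.integral_mul_const,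
      lem_J, lem_J]
  simp only [step2]
  -- Step 3: integrate over φ₂
  have step3 : ∀ x T2 : ℝ,
      (∫ t in (0:ℝ)..(2*π), ∑ s₁ ∈ S, ∑ s₂ ∈ S, ((nR:ℝ)-s₁) * ((nR:ℝ)-s₂) *
          (π * (2*π*(J₀ (((s₁:ℝ)*a - (s₂:ℝ)*a)/2))^2
                  * Real.cos ((s₁:ℝ)*a*x - (s₂:ℝ)*a*(Real.sin T2 * Real.sin t))
              + 2*π*(J₀ (((s₁:ℝ)*a + (s₂:ℝ)*a)/2))^2
                  * Real.cos ((s₁:ℝ)*a*x + (s₂:ℝ)*a*(Real.sin T2 * Real.sin t)))))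
      = ∑ s₁ ∈ S, ∑ s₂ ∈ S, ((nR:ℝ)-s₁) * ((nR:ℝ)-s₂) *
          ((2*π)^2*π * ((J₀ (((s₁:ℝ)*a - (s₂:ℝ)*a)/2))^2 + (J₀ (((s₁:ℝ)*a + (s₂:ℝ)*a)/2))^2)
            * (J₀ ((s₂:ℝ)*a*Real.sin T2) * Real.cos ((s₁:ℝ)*a*x))) := by
    intro x T2
    rw [int_sum2 S S (fun s₁ s₂ t => ((nR:ℝ)-s₁) * ((nR:ℝ)-s₂) *
          (π * (2*π*(J₀ (((s₁:ℝ)*a - (s₂:ℝ)*a)/2))^2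
                  * Real.cos ((s₁:ℝ)*a*x - (s₂:ℝ)*a*(Real.sin T2 * Real.sin t))
              + 2*π*(J₀ (((s₁:ℝ)*a + (s₂:ℝ)*a)/2))^2
                  * Real.cos ((s₁:ℝ)*a*x + (s₂:ℝ)*a*(Real.sin T2 * Real.sin t)))))
      (fun i j => by fun_prop)]
    refine Finset.sum_congr rfl fun s₁ _ => Finset.sum_congr rfl fun s₂ _ => ?_
    simp only [show ∀ t : ℝ, (s₁:ℝ)*a*x - (s₂:ℝ)*a*(Real.sin T2 * Real.sin t)
        = ((s₁:ℝ)*a*x) - ((s₂:ℝ)*a*Real.sin T2) * Real.sin t from fun t => by ring,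
      show ∀ t : ℝ, (s₁:ℝ)*a*x + (s₂:ℝ)*a*(Real.sin T2 * Real.sin t)
        = ((s₁:ℝ)*a*x) + ((s₂:ℝ)*a*Real.sin T2) * Real.sin t from fun t => by ring]
    rw [intervalIntegral.integral_const_mul, intervalIntegral.integral_const_mul,
      intervalIntegral.integral_add
        (Continuous.intervalIntegrable (by fun_prop) _ _)
        (Continuous.intervalIntegrable (by fun_prop) _ _),
      intervalIntegral.integral_const_mul, intervalIntegral.integral_const_mul,
      lem_cos_sub, lem_cos_add]
    ring
  simp only [step3]
  -- Step 4: integrate over θ₂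
  have step4 : ∀ x : ℝ,
      (∫ T2 in (0:ℝ)..(2*π), ∑ s₁ ∈ S, ∑ s₂ ∈ S, ((nR:ℝ)-s₁) * ((nR:ℝ)-s₂) *
          ((2*π)^2*π * ((J₀ (((s₁:ℝ)*a - (s₂:ℝ)*a)/2))^2 + (J₀ (((s₁:ℝ)*a + (s₂:ℝ)*a)/2))^2)
            * (J₀ ((s₂:ℝ)*a*Real.sin T2) * Real.cos ((s₁:ℝ)*a*x))))
      = ∑ s₁ ∈ S, ∑ s₂ ∈ S, ((nR:ℝ)-s₁) * ((nR:ℝ)-s₂) *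
          ((2*π)^3*π * ((J₀ (((s₁:ℝ)*a - (s₂:ℝ)*a)/2))^2 + (J₀ (((s₁:ℝ)*a + (s₂:ℝ)*a)/2))^2)
            * ((J₀ ((s₂:ℝ)*a/2))^2 * Real.cos ((s₁:ℝ)*a*x))) := by
    intro x
    rw [int_sum2 S S (fun s₁ s₂ T2 => ((nR:ℝ)-s₁) * ((nR:ℝ)-s₂) *
          ((2*π)^2*π * ((J₀ (((s₁:ℝ)*a - (s₂:ℝ)*a)/2))^2 + (J₀ (((s₁:ℝ)*a + (s₂:ℝ)*a)/2))^2)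
            * (J₀ ((s₂:ℝ)*a*Real.sin T2) * Real.cos ((s₁:ℝ)*a*x))))
      (fun i j => by fun_prop)]
    refine Finset.sum_congr rfl fun s₁ _ => Finset.sum_congr rfl fun s₂ _ => ?_
    have hpt : ∀ T2 : ℝ, ((nR:ℝ)-s₁) * ((nR:ℝ)-s₂) *
          ((2*π)^2*π * ((J₀ (((s₁:ℝ)*a - (s₂:ℝ)*a)/2))^2 + (J₀ (((s₁:ℝ)*a + (s₂:ℝ)*a)/2))^2)
            * (J₀ ((s₂:ℝ)*a*Real.sin T2) * Real.cos ((s₁:ℝ)*a*x)))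
        = (((nR:ℝ)-s₁) * ((nR:ℝ)-s₂) *
          ((2*π)^2*π * ((J₀ (((s₁:ℝ)*a - (s₂:ℝ)*a)/2))^2 + (J₀ (((s₁:ℝ)*a + (s₂:ℝ)*a)/2))^2)
            * Real.cos ((s₁:ℝ)*a*x))) * J₀ ((s₂:ℝ)*a*Real.sin T2) := fun T2 => by ring
    simp only [hpt]
    rw [intervalIntegral.integral_const_mul, lem_J]
    ring
  simp only [step4]
  -- Step 5: integrate over φ₁
  have step5 : ∀ T1 : ℝ,
      (∫ t in (0:ℝ)..(2*π), ∑ s₁ ∈ S, ∑ s₂ ∈ S, ((nR:ℝ)-s₁) * ((nR:ℝ)-s₂) *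
          ((2*π)^3*π * ((J₀ (((s₁:ℝ)*a - (s₂:ℝ)*a)/2))^2 + (J₀ (((s₁:ℝ)*a + (s₂:ℝ)*a)/2))^2)
            * ((J₀ ((s₂:ℝ)*a/2))^2 * Real.cos ((s₁:ℝ)*a*(Real.sin T1 * Real.sin t)))))
      = ∑ s₁ ∈ S, ∑ s₂ ∈ S, ((nR:ℝ)-s₁) * ((nR:ℝ)-s₂) *
          ((2*π)^4*π * ((J₀ (((s₁:ℝ)*a - (s₂:ℝ)*a)/2))^2 + (J₀ (((s₁:ℝ)*a + (s₂:ℝ)*a)/2))^2)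
            * ((J₀ ((s₂:ℝ)*a/2))^2 * J₀ ((s₁:ℝ)*a*Real.sin T1))) := by
    intro T1
    rw [int_sum2 S S (fun s₁ s₂ t => ((nR:ℝ)-s₁) * ((nR:ℝ)-s₂) *
          ((2*π)^3*π * ((J₀ (((s₁:ℝ)*a - (s₂:ℝ)*a)/2))^2 + (J₀ (((s₁:ℝ)*a + (s₂:ℝ)*a)/2))^2)
            * ((J₀ ((s₂:ℝ)*a/2))^2 * Real.cos ((s₁:ℝ)*a*(Real.sin T1 * Real.sin t)))))
      (fun i j => by fun_prop)]
    refine Finset.sum_congr rfl fun s₁ _ => Finset.sum_congr rfl fun s₂ _ => ?_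
    simp only [show ∀ t : ℝ, (s₁:ℝ)*a*(Real.sin T1 * Real.sin t)
        = ((s₁:ℝ)*a*Real.sin T1) * Real.sin t from fun t => by ring]
    have hpt : ∀ t : ℝ, ((nR:ℝ)-s₁) * ((nR:ℝ)-s₂) *
          ((2*π)^3*π * ((J₀ (((s₁:ℝ)*a - (s₂:ℝ)*a)/2))^2 + (J₀ (((s₁:ℝ)*a + (s₂:ℝ)*a)/2))^2)
            * ((J₀ ((s₂:ℝ)*a/2))^2 * Real.cos (((s₁:ℝ)*a*Real.sin T1) * Real.sin t)))
        = (((nR:ℝ)-s₁) * ((nR:ℝ)-s₂) *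
          ((2*π)^3*π * ((J₀ (((s₁:ℝ)*a - (s₂:ℝ)*a)/2))^2 + (J₀ (((s₁:ℝ)*a + (s₂:ℝ)*a)/2))^2)
            * (J₀ ((s₂:ℝ)*a/2))^2)) * Real.cos (((s₁:ℝ)*a*Real.sin T1) * Real.sin t) :=
      fun t => by ring
    simp only [hpt]
    rw [intervalIntegral.integral_const_mul, cos_int]
    ring
  simp only [step5]
  -- Step 6: integrate over θ₁
  have step6 :
      (∫ T1 in (0:ℝ)..(2*π), ∑ s₁ ∈ S, ∑ s₂ ∈ S, ((nR:ℝ)-s₁) * ((nR:ℝ)-s₂) *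
          ((2*π)^4*π * ((J₀ (((s₁:ℝ)*a - (s₂:ℝ)*a)/2))^2 + (J₀ (((s₁:ℝ)*a + (s₂:ℝ)*a)/2))^2)
            * ((J₀ ((s₂:ℝ)*a/2))^2 * J₀ ((s₁:ℝ)*a*Real.sin T1))))
      = ∑ s₁ ∈ S, ∑ s₂ ∈ S, ((nR:ℝ)-s₁) * ((nR:ℝ)-s₂) *
          ((2*π)^5*π * ((J₀ (((s₁:ℝ)*a - (s₂:ℝ)*a)/2))^2 + (J₀ (((s₁:ℝ)*a + (s₂:ℝ)*a)/2))^2)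
            * ((J₀ ((s₂:ℝ)*a/2))^2 * (J₀ ((s₁:ℝ)*a/2))^2)) := by
    rw [int_sum2 S S (fun s₁ s₂ T1 => ((nR:ℝ)-s₁) * ((nR:ℝ)-s₂) *
          ((2*π)^4*π * ((J₀ (((s₁:ℝ)*a - (s₂:ℝ)*a)/2))^2 + (J₀ (((s₁:ℝ)*a + (s₂:ℝ)*a)/2))^2)
            * ((J₀ ((s₂:ℝ)*a/2))^2 * J₀ ((s₁:ℝ)*a*Real.sin T1))))
      (fun i j => by fun_prop)]
    refine Finset.sum_congr rfl fun s₁ _ => Finset.sum_congr rfl fun s₂ _ => ?_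
    have hpt : ∀ T1 : ℝ, ((nR:ℝ)-s₁) * ((nR:ℝ)-s₂) *
          ((2*π)^4*π * ((J₀ (((s₁:ℝ)*a - (s₂:ℝ)*a)/2))^2 + (J₀ (((s₁:ℝ)*a + (s₂:ℝ)*a)/2))^2)
            * ((J₀ ((s₂:ℝ)*a/2))^2 * J₀ ((s₁:ℝ)*a*Real.sin T1)))
        = (((nR:ℝ)-s₁) * ((nR:ℝ)-s₂) *
          ((2*π)^4*π * ((J₀ (((s₁:ℝ)*a - (s₂:ℝ)*a)/2))^2 + (J₀ (((s₁:ℝ)*a + (s₂:ℝ)*a)/2))^2)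
            * (J₀ ((s₂:ℝ)*a/2))^2)) * J₀ ((s₁:ℝ)*a*Real.sin T1) := fun T1 => by ring
    simp only [hpt]
    rw [intervalIntegral.integral_const_mul, lem_J]
    ring
  rw [step6]
  -- Final algebra
  have hπ : (π : ℝ) ≠ 0 := Real.pi_ne_zero
  rw [Finset.mul_sum]
  simp only [Finset.mul_sum]
  rw [Finset.sum_comm]
  have inner_eq : ∀ s₂ ∈ S,
      (∑ s₁ ∈ S, 1 / (2*π)^6 * (((nR:ℝ)-s₁) * ((nR:ℝ)-s₂) *
          ((2*π)^5*π * ((J₀ (((s₁:ℝ)*a - (s₂:ℝ)*a)/2))^2 + (J₀ (((s₁:ℝ)*a + (s₂:ℝ)*a)/2))^2)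
            * ((J₀ ((s₂:ℝ)*a/2))^2 * (J₀ ((s₁:ℝ)*a/2))^2))))
      = ((nR : ℝ) - s₂) ^ 2 *
          ((1 / 2) * (J₀ ((s₂ : ℝ) * a / 2)) ^ 4 * (1 + (J₀ ((s₂ : ℝ) * a)) ^ 2)) +
        ∑ s₁ ∈ S.filter (· ≠ s₂),
          ((nR : ℝ) - s₁) * ((nR : ℝ) - s₂) *
            ((J₀ ((s₁ : ℝ) * a / 2)) ^ 2 * (J₀ ((s₂ : ℝ) * a / 2)) ^ 2 / 2) *
            ((J₀ (((s₁ : ℝ) + (s₂ : ℝ)) * a / 2)) ^ 2 +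
             (J₀ (|(s₁ : ℝ) - (s₂ : ℝ)| * a / 2)) ^ 2) := by
    intro s₂ hs₂
    rw [← Finset.sum_filter_add_sum_filter_not S (· ≠ s₂), add_comm]
    congr 1
    · -- diagonal
      have hfe : S.filter (fun s₁ => ¬ s₁ ≠ s₂) = {s₂} := by
        simp only [not_not]
        rw [Finset.filter_eq' S s₂, if_pos hs₂]
      rw [hfe, Finset.sum_singleton]
      rw [show ((s₂:ℝ)*a - (s₂:ℝ)*a)/2 = (0:ℝ) by ring,
        show ((s₂:ℝ)*a + (s₂:ℝ)*a)/2 = (s₂:ℝ)*a by ring, J0_zero]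
      field_simp
    · refine Finset.sum_congr rfl fun s₁ _ => ?_
      rw [show ((s₁:ℝ) + (s₂:ℝ)) * a / 2 = ((s₁:ℝ)*a + (s₂:ℝ)*a)/2 by ring]
      rcases abs_cases ((s₁:ℝ) - (s₂:ℝ)) with ⟨h, _⟩ | ⟨h, _⟩ <;> rw [h]
      · rw [show ((s₁:ℝ) - (s₂:ℝ)) * a / 2 = ((s₁:ℝ)*a - (s₂:ℝ)*a)/2 by ring]
        field_simp
        ring
      · rw [show -((s₁:ℝ) - (s₂:ℝ)) * a / 2 = -(((s₁:ℝ)*a - (s₂:ℝ)*a)/2) by ring, J0_even]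
        field_simp
        ring
  rw [Finset.sum_congr rfl inner_eq, Finset.sum_add_distrib]
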